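/- Let λ, μ, ν be integer partitions. If (λ, μ, ν) is (⊞,⊞)-storable, then λ + ν and μ are 1-interlaced. -/
import Mathlib


/-- An integer partition, modeled as a function `l : ℕ → ℕ` where `l i` is the part
`λ_{i+1}` (0-indexed): weakly decreasing with only finitely many nonzero entries. -/
def IsPartition (l : ℕ → ℕ) : Prop :=
  (∀ i, l (i + 1) ≤ l i) ∧ ∃ N, ∀ i, N ≤ i → l i = 0

/-- `(l, m)` is a storable pair: `λ_i ≥ μ_i ≥ λ_{i+1}` for all `i ≥ 1` (0-indexed). -/
def StorablePair (l m : ℕ → ℕ) : Prop :=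
  ∀ i, m i ≤ l i ∧ l (i + 1) ≤ m i

/-- `r` is the integer partition `λ + ν` whose multiset of (nonzero) parts is the disjoint
union of the multisets of parts of `λ` and of `ν`. -/
def IsPartitionSum (r l n : ℕ → ℕ) : Prop :=
  IsPartition r ∧ ∀ k, 0 < k → {i | r i = k}.ncard = {i | l i = k}.ncard + {i | n i = k}.ncard

/-- `ρ` and `μ` are `1`-interlaced: `ρ_1 ≥ ρ_2 ≥ μ_1 ≥ ρ_3 ≥ ρ_4 ≥ μ_2 ≥ …`,
i.e. `ρ_{2k} ≥ μ_k ≥ ρ_{2k+1}` for all `k ≥ 1` (0-indexed below). -/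
def Interlaced1 (r m : ℕ → ℕ) : Prop :=
  ∀ j, m j ≤ r (2 * j + 1) ∧ r (2 * j + 2) ≤ m j

lemma fin_ge (f : ℕ → ℕ) (N x : ℕ) (hN : ∀ i, N ≤ i → f i = 0) (hx : 0 < x) :
    {i | x ≤ f i}.Finite := by
  apply (Set.finite_Iio N).subset
  intro i hi
  simp only [Set.mem_setOf_eq] at hi
  simp only [Set.mem_Iio]
  by_contra h
  have := hN i (by omega)
  omega

lemma fin_eq (f : ℕ → ℕ) (N x : ℕ) (hN : ∀ i, N ≤ i → f i = 0) (hx : 0 < x) :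
    {i | f i = x}.Finite := by
  apply (fin_ge f N x hN hx).subset
  intro i hi
  simp only [Set.mem_setOf_eq] at hi ⊢
  omega

lemma cnt_step (f : ℕ → ℕ) (N x : ℕ) (hN : ∀ i, N ≤ i → f i = 0) (hx : 0 < x) :
    {i | x ≤ f i}.ncard = {i | f i = x}.ncard + {i | x + 1 ≤ f i}.ncard := by
  have hs : {i | x ≤ f i} = {i | f i = x} ∪ {i | x + 1 ≤ f i} := by
    ext i; simp only [Set.mem_setOf_eq, Set.mem_union]; omega
  rw [hs, Set.ncard_union_eq (Set.disjoint_left.mpr (by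
      intro i h1 h2
      simp only [Set.mem_setOf_eq] at h1 h2
      omega)) (fin_eq f N x hN hx) (fin_ge f N (x + 1) hN (by omega))]

lemma cnt_sum (l n r : ℕ → ℕ) (N : ℕ)
    (hlN : ∀ i, N ≤ i → l i = 0) (hnN : ∀ i, N ≤ i → n i = 0) (hrN : ∀ i, N ≤ i → r i = 0)
    (hld : ∀ i, l (i + 1) ≤ l i) (hnd : ∀ i, n (i + 1) ≤ n i) (hrd : ∀ i, r (i + 1) ≤ r i)
    (heq : ∀ k, 0 < k → {i | r i = k}.ncard = {i | l i = k}.ncard + {i | n i = k}.ncard) :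
    ∀ x, 0 < x → {i | x ≤ r i}.ncard = {i | x ≤ l i}.ncard + {i | x ≤ n i}.ncard := by
  set B := max (l 0) (max (n 0) (r 0)) with hB
  have empty : ∀ (f : ℕ → ℕ) (x : ℕ), (∀ i, f (i + 1) ≤ f i) → f 0 < x →
      {i | x ≤ f i} = ∅ := by
    intro f x hf hfx
    ext i
    simp only [Set.mem_setOf_eq, Set.mem_empty_iff_false, iff_false]
    have : f i ≤ f 0 := antitone_nat_of_succ_le hf (Nat.zero_le i)
    omega
  suffices h : ∀ t x, 0 < x → B < x + t →
      {i | x ≤ r i}.ncard = {i | x ≤ l i}.ncard + {i | x ≤ n i}.ncard by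
    intro x hx
    exact h (B + 1) x hx (by omega)
  intro t
  induction t with
  | zero =>
    intro x hx hBx
    rw [empty r x hrd (by omega), empty l x hld (by omega), empty n x hnd (by omega)]
    simp
  | succ t ih =>
    intro x hx hBx
    rw [cnt_step r N x hrN hx, cnt_step l N x hlN hx, cnt_step n N x hnN hx,
      heq x hx, ih (x + 1) (by omega) (by omega)]
    ring

lemma le_of_lt_cnt (f : ℕ → ℕ) (hf : ∀ i, f (i + 1) ≤ f i) (x j : ℕ)
    (hfin : {i | x ≤ f i}.Finite) (hj : j < {i | x ≤ f i}.ncard) : x ≤ f j := by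
  by_contra h
  have hsub : {i | x ≤ f i} ⊆ Set.Iio j := by
    intro i hi
    simp only [Set.mem_setOf_eq] at hi
    simp only [Set.mem_Iio]
    by_contra hij
    exact h (hi.trans (antitone_nat_of_succ_le hf (by omega)))
  have h1 := Set.ncard_le_ncard hsub (Set.finite_Iio j)
  have h2 : (Set.Iio j).ncard = j := by
    rw [show Set.Iio j = ↑(Finset.range j) by ext; simp, Set.ncard_coe_finset,
      Finset.card_range]
  omega

lemma lt_cnt_of_le (f : ℕ → ℕ) (hf : ∀ i, f (i + 1) ≤ f i) (x j : ℕ)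
    (hfin : {i | x ≤ f i}.Finite) (hj : x ≤ f j) : j < {i | x ≤ f i}.ncard := by
  have hsub : Set.Iic j ⊆ {i | x ≤ f i} := by
    intro i hi
    simp only [Set.mem_Iic] at hi
    exact hj.trans (antitone_nat_of_succ_le hf hi)
  have h1 := Set.ncard_le_ncard hsub hfin
  have h2 : (Set.Iic j).ncard = j + 1 := by
    rw [show Set.Iic j = ↑(Finset.range (j + 1)) by ext; simp [Nat.lt_succ_iff],
      Set.ncard_coe_finset, Finset.card_range]
  omega

/-- If `(λ, μ, ν)` is `(⊞,⊞)`-storable (i.e. `(λ, μ)` and `(ν, μ)` are storable pairs),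
then `λ + ν` and `μ` are `1`-interlaced. -/
theorem storablePP_interlaced (l m n r : ℕ → ℕ)
    (hl : IsPartition l) (hm : IsPartition m) (hn : IsPartition n)
    (h₁ : StorablePair l m) (h₂ : StorablePair n m)
    (hr : IsPartitionSum r l n) :
    Interlaced1 r m := by
  obtain ⟨hld, Nl, hNl⟩ := hl
  obtain ⟨hnd, Nn, hNn⟩ := hn
  obtain ⟨⟨hrd, Nr, hNr⟩, hcnt⟩ := hr
  set N := max Nl (max Nn Nr) with hN
  have hNl' : ∀ i, N ≤ i → l i = 0 := fun i hi => hNl i (by omega)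
  have hNn' : ∀ i, N ≤ i → n i = 0 := fun i hi => hNn i (by omega)
  have hNr' : ∀ i, N ≤ i → r i = 0 := fun i hi => hNr i (by omega)
  have hsum := cnt_sum l n r N hNl' hNn' hNr' hld hnd hrd hcnt
  intro j
  constructor
  · rcases Nat.eq_zero_or_pos (m j) with h0 | hpos
    · omega
    · apply le_of_lt_cnt r hrd (m j) _ (fin_ge r N _ hNr' hpos)
      rw [hsum (m j) hpos]
      have hL : j < {i | m j ≤ l i}.ncard :=
        lt_cnt_of_le l hld (m j) j (fin_ge l N _ hNl' hpos) (h₁ j).1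
      have hR : j < {i | m j ≤ n i}.ncard :=
        lt_cnt_of_le n hnd (m j) j (fin_ge n N _ hNn' hpos) (h₂ j).1
      omega
  · rcases Nat.eq_zero_or_pos (r (2 * j + 2)) with h0 | hpos
    · omega
    · set y := r (2 * j + 2) with hy
      have hmem : 2 * j + 2 < {i | y ≤ r i}.ncard :=
        lt_cnt_of_le r hrd y (2 * j + 2) (fin_ge r N _ hNr' hpos) le_rfl
      rw [hsum y hpos] at hmem
      rcases Nat.lt_or_ge (j + 1) {i | y ≤ l i}.ncard with hc | hc
      · have := le_of_lt_cnt l hld y (j + 1) (fin_ge l N _ hNl' hpos) hc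
        exact this.trans (h₁ j).2
      · have hc2 : j + 1 < {i | y ≤ n i}.ncard := by omega
        have := le_of_lt_cnt n hnd y (j + 1) (fin_ge n N _ hNn' hpos) hc2
        exact this.trans (h₂ j).2
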